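/- For every fixed a ∈ P and each i ∈ {0,1}, as b runs through D_i the product ab mod N runs through P hitting every element of P exactly (p−1)/2 times; that is, for every c ∈ P, the number of b ∈ D_i with ab ≡ c (mod N) equals (p−1)/2. Symmetrically, for every fixed a ∈ Q and every c ∈ Q, the number of b ∈ D_i with ab ≡ c (mod N) equals (q−1)/2. -/

import Mathlib

private lemma count_aux (d n r : ℕ) (hr : r < d) :
    ((Finset.range (d * n)).filter (fun s => s % d = r)).card = n := by
  have hd : 0 < d := Nat.lt_of_le_of_lt (Nat.zero_le r) hr
  have himg : (Finset.range (d * n)).filter (fun s => s % d = r)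
      = (Finset.range n).image (fun j => j * d + r) := by
    ext s
    simp only [Finset.mem_filter, Finset.mem_range, Finset.mem_image]
    constructor
    · rintro ⟨hs, hmod⟩
      refine ⟨s / d, ?_, ?_⟩
      · exact Nat.div_lt_of_lt_mul hs
      · rw [← hmod]; exact Nat.div_add_mod' s d
    · rintro ⟨j, hj, rfl⟩
      constructor
      · have h1 : (j + 1) * d ≤ n * d := Nat.mul_le_mul_right d hj
        have h2 : j * d + r < (j + 1) * d := by rw [add_mul, one_mul]; omega
        rw [mul_comm d n]; omega
      · rw [add_comm, Nat.add_mul_mod_self_right]; exact Nat.mod_eq_of_lt hr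
  rw [himg, Finset.card_image_of_injOn, Finset.card_range]
  intro a _ b _ h
  simp only at h
  have : a * d = b * d := by omega
  exact Nat.eq_of_mul_eq_mul_right hd this

private lemma dlog {q : ℕ} (hq : q.Prime) {g : ℕ}
    (hg : IsPrimitiveRoot (g : ZMod q) (q - 1)) (u : ZMod q) (hu : u ≠ 0) :
    ∃ s0, s0 < q - 1 ∧ (g : ZMod q) ^ s0 = u := by
  haveI : Fact q.Prime := ⟨hq⟩
  have hq2 : 2 ≤ q := hq.two_le
  have hq1 : 0 < q - 1 := by omega
  have hgu : IsUnit (g : ZMod q) := hg.isUnit hq1.ne'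
  have hguval : (hgu.unit : ZMod q) = (g : ZMod q) := hgu.unit_spec
  have hord : orderOf hgu.unit = q - 1 := by
    rw [← orderOf_units, hguval]; exact hg.eq_orderOf.symm
  have hcard : Fintype.card (ZMod q)ˣ = q - 1 := by
    rw [ZMod.card_units_eq_totient, Nat.totient_prime hq]
  have hbij : Function.Bijective (fun k : Fin (q - 1) => hgu.unit ^ (k : ℕ)) := by
    rw [Fintype.bijective_iff_injective_and_card]
    refine ⟨?_, by simp [hcard]⟩
    intro a b h
    simp only at h
    rw [pow_eq_pow_iff_modEq, hord] at h
    have : (a : ℕ) % (q - 1) = (b : ℕ) % (q - 1) := h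
    rw [Nat.mod_eq_of_lt a.2, Nat.mod_eq_of_lt b.2] at this
    exact Fin.ext this
  obtain ⟨k, hk⟩ := hbij.2 (hu.isUnit.unit)
  refine ⟨k, k.2, ?_⟩
  have hv := congrArg Units.val hk
  rw [Units.val_pow_eq_pow_val, hguval, hu.isUnit.unit_spec] at hv
  exact hv

private lemma pow_iff {q : ℕ} (hq : q.Prime) {g : ℕ}
    (hg : IsPrimitiveRoot (g : ZMod q) (q - 1)) (s t : ℕ) :
    (g : ZMod q) ^ s = (g : ZMod q) ^ t ↔ s ≡ t [MOD q - 1] := by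
  haveI : Fact q.Prime := ⟨hq⟩
  have hq1 : 0 < q - 1 := by have := hq.two_le; omega
  have hgu : IsUnit (g : ZMod q) := hg.isUnit hq1.ne'
  have hguval : (hgu.unit : ZMod q) = (g : ZMod q) := hgu.unit_spec
  have hord : orderOf hgu.unit = q - 1 := by
    rw [← orderOf_units, hguval]; exact hg.eq_orderOf.symm
  rw [← hguval, ← Units.val_pow_eq_pow_val, ← Units.val_pow_eq_pow_val,
    ← Units.ext_iff, pow_eq_pow_iff_modEq, hord]

private lemma filter_card_eq {e d n : ℕ} (he : e = d * n) (f : ℕ → ℕ)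
    (hf : Set.InjOn f (Finset.range e)) (Pred : ℕ → Prop) [DecidablePred Pred]
    (s0 : ℕ) (hs0 : s0 < d)
    (hequiv : ∀ s < e, (Pred (f s) ↔ s % d = s0)) :
    (((Finset.range e).image f).filter Pred).card = n := by
  rw [Finset.filter_image, Finset.card_image_of_injOn
      (hf.mono (by exact_mod_cast Finset.filter_subset _ _))]
  rw [Finset.filter_congr (fun s hs => hequiv s (Finset.mem_range.mp hs))]
  rw [he] at *
  exact count_aux d n s0 hs0

private lemma inj_aux {p q : ℕ} (hp : p.Prime) (hq : q.Prime)
    (hgcd : Nat.gcd (p - 1) (q - 1) = 2)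
    {g : ℕ} (hgp : IsPrimitiveRoot (g : ZMod p) (p - 1))
    (hgq : IsPrimitiveRoot (g : ZMod q) (q - 1))
    {x : ℕ} (hxp : (x : ZMod p) = (g : ZMod p)) (hxq : (x : ZMod q) = 1)
    {e : ℕ} (he : e = (p - 1) * (q - 1) / 2) (i : ℕ) :
    Set.InjOn (fun s => g ^ s * x ^ i % (p * q)) (Finset.range e) := by
  intro s hs t ht h
  simp only [Finset.coe_range, Set.mem_Iio] at hs ht
  have hmod : g ^ s * x ^ i ≡ g ^ t * x ^ i [MOD p * q] := h
  have hmp : g ^ s * x ^ i ≡ g ^ t * x ^ i [MOD p] := hmod.of_dvd (dvd_mul_right p q)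
  have hmq : g ^ s * x ^ i ≡ g ^ t * x ^ i [MOD q] := hmod.of_dvd (dvd_mul_left q p)
  have hzp : ((g : ZMod p)) ^ (s + i) = (g : ZMod p) ^ (t + i) := by
    have h' := (ZMod.natCast_eq_natCast_iff _ _ _).mpr hmp
    push_cast at h'
    rw [hxp] at h'
    rw [pow_add, pow_add]
    exact h'
  have hzq : ((g : ZMod q)) ^ s = (g : ZMod q) ^ t := by
    have h' := (ZMod.natCast_eq_natCast_iff _ _ _).mpr hmq
    push_cast at h'
    rw [hxq] at h'
    simpa using h'
  have hsp : s ≡ t [MOD p - 1] :=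
    Nat.ModEq.add_right_cancel' i ((pow_iff hp hgp _ _).mp hzp)
  have hsq : s ≡ t [MOD q - 1] := (pow_iff hq hgq _ _).mp hzq
  have hd1 : ((p - 1 : ℕ) : ℤ) ∣ (t : ℤ) - s := (Nat.modEq_iff_dvd).mp hsp
  have hd2 : ((q - 1 : ℕ) : ℤ) ∣ (t : ℤ) - s := (Nat.modEq_iff_dvd).mp hsq
  have hdl : ((Nat.lcm (p - 1) (q - 1) : ℕ) : ℤ) ∣ (t : ℤ) - s := by
    have := Int.coe_lcm_dvd hd1 hd2; rwa [Int.lcm_natCast_natCast] at this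
  have hse : s ≡ t [MOD Nat.lcm (p - 1) (q - 1)] := (Nat.modEq_iff_dvd).mpr hdl
  have hlcm : Nat.lcm (p - 1) (q - 1) = e := by
    have hM := Nat.gcd_mul_lcm (p - 1) (q - 1)
    rw [hgcd] at hM
    omega
  rw [hlcm] at hse
  have hst : s % e = t % e := hse
  rwa [Nat.mod_eq_of_lt hs, Nat.mod_eq_of_lt ht] at hst

private lemma cond_equiv {p' q' N : ℕ} (hq' : q'.Prime)
    (hcop : Nat.Coprime p' q') (hN : N = p' * q')
    {g x : ℕ} (i : ℕ) {a c : ℕ}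
    (hgq : IsPrimitiveRoot (g : ZMod q') (q' - 1))
    (hpa : p' ∣ a) (hpc : p' ∣ c) (hclt : c < N)
    (hA : (a : ZMod q') ≠ 0) (hC : (c : ZMod q') ≠ 0)
    (hX : ((x : ZMod q')) ^ i ≠ 0) :
    ∃ s0, s0 < q' - 1 ∧
      ∀ s, (a * (g ^ s * x ^ i % N) % N = c ↔ s % (q' - 1) = s0) := by
  haveI : Fact q'.Prime := ⟨hq'⟩
  set G := (g : ZMod q') with hG
  set X := (x : ZMod q') ^ i with hXdef
  set A := (a : ZMod q') with hAdef
  set C := (c : ZMod q') with hCdef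
  have hAX : A * X ≠ 0 := mul_ne_zero hA hX
  have hu : (A * X)⁻¹ * C ≠ 0 := mul_ne_zero (inv_ne_zero hAX) hC
  obtain ⟨s0, hs0, hgs0⟩ := dlog hq' hgq _ hu
  refine ⟨s0, hs0, fun s => ?_⟩
  have h1 : a * (g ^ s * x ^ i % N) % N = a * (g ^ s * x ^ i) % N :=
    (Nat.mod_modEq _ _).mul_left a
  rw [h1]
  have h2 : (a * (g ^ s * x ^ i) % N = c) ↔ a * (g ^ s * x ^ i) ≡ c [MOD N] := by
    unfold Nat.ModEq
    rw [Nat.mod_eq_of_lt hclt]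
  rw [h2, hN, ← Nat.modEq_and_modEq_iff_modEq_mul hcop]
  have h3 : a * (g ^ s * x ^ i) ≡ c [MOD p'] := by
    have h0a : a ≡ 0 [MOD p'] := (Nat.modEq_zero_iff_dvd).mpr hpa
    have h0c : (0 : ℕ) ≡ c [MOD p'] := ((Nat.modEq_zero_iff_dvd).mpr hpc).symm
    have h0 := h0a.mul_right (g ^ s * x ^ i)
    have h0' : a * (g ^ s * x ^ i) ≡ 0 [MOD p'] := by simpa using h0
    exact h0'.trans h0c
  rw [and_iff_right h3, ← ZMod.natCast_eq_natCast_iff]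
  push_cast
  have h5 : (A * (G ^ s * X) = C) ↔ G ^ s = (A * X)⁻¹ * C := by
    constructor
    · intro h
      have h' : (A * X) * G ^ s = C := by rw [← h]; ring
      rw [← h', ← mul_assoc, inv_mul_cancel₀ hAX, one_mul]
    · intro h
      rw [h]
      field_simp
  rw [h5, ← hgs0, pow_iff hq' hgq, Nat.ModEq, Nat.mod_eq_of_lt hs0]

/-- For fixed `a ∈ P` and any `c ∈ P`, the number of `b ∈ D_i` with `ab ≡ c (mod N)`
equals `(p-1)/2`; symmetrically for `a, c ∈ Q` the count is `(q-1)/2`. -/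
theorem whiteman_multiplication_count
    (p q : ℕ) (hp : p.Prime) (hq : q.Prime) (hpq : p ≠ q)
    (hpo : Odd p) (hqo : Odd q)
    (hgcd : Nat.gcd (p - 1) (q - 1) = 2)
    (g : ℕ)
    (hgp : IsPrimitiveRoot (g : ZMod p) (p - 1))
    (hgq : IsPrimitiveRoot (g : ZMod q) (q - 1))
    (x : ℕ) (hxlt : x < p * q) (hxp : x % p = g % p) (hxq : x % q = 1)
    (e : ℕ) (he : e = (p - 1) * (q - 1) / 2)
    (D : ℕ → Finset ℕ)
    (hD : ∀ i, D i = (Finset.range e).image (fun s => g ^ s * x ^ i % (p * q)))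
    (P : Finset ℕ) (hP : P = (Finset.Icc 1 (q - 1)).image (fun k => k * p % (p * q)))
    (Q : Finset ℕ) (hQ : Q = (Finset.Icc 1 (p - 1)).image (fun k => k * q % (p * q))) :
    ∀ i < 2,
      (∀ a ∈ P, ∀ c ∈ P,
        ((D i).filter (fun b => a * b % (p * q) = c)).card = (p - 1) / 2) ∧
      (∀ a ∈ Q, ∀ c ∈ Q,
        ((D i).filter (fun b => a * b % (p * q) = c)).card = (q - 1) / 2) := by
  haveI : Fact p.Prime := ⟨hp⟩
  haveI : Fact q.Prime := ⟨hq⟩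
  have hp3 : 3 ≤ p := by
    have := hp.two_le; have := Nat.odd_iff.mp hpo; omega
  have hq3 : 3 ≤ q := by
    have := hq.two_le; have := Nat.odd_iff.mp hqo; omega
  have hcop : Nat.Coprime p q := (Nat.coprime_primes hp hq).mpr hpq
  have hxpz : (x : ZMod p) = (g : ZMod p) := by
    rw [← ZMod.natCast_mod x p, hxp, ZMod.natCast_mod]
  have hxqz : (x : ZMod q) = 1 := by
    rw [← ZMod.natCast_mod x q, hxq, Nat.cast_one]
  obtain ⟨tp, htp⟩ := hpo
  obtain ⟨tq, htq⟩ := hqo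
  have heq1 : e = (q - 1) * ((p - 1) / 2) := by
    rw [show (p - 1) / 2 = tp from by omega, he, show p - 1 = 2 * tp from by omega,
      show 2 * tp * (q - 1) = 2 * ((q - 1) * tp) from by ring,
      Nat.mul_div_cancel_left _ two_pos]
  have heq2 : e = (p - 1) * ((q - 1) / 2) := by
    rw [show (q - 1) / 2 = tq from by omega, he, show q - 1 = 2 * tq from by omega,
      show (p - 1) * (2 * tq) = 2 * ((p - 1) * tq) from by ring,
      Nat.mul_div_cancel_left _ two_pos]
  have hNpos : 0 < p * q := by positivity
  intro i _
  have hinj := inj_aux hp hq hgcd hgp hgq hxpz hxqz he i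
  constructor
  · intro a ha c hc
    rw [hP] at ha hc
    obtain ⟨k, hk, rfl⟩ := Finset.mem_image.mp ha
    obtain ⟨m, hm, rfl⟩ := Finset.mem_image.mp hc
    rw [Finset.mem_Icc] at hk hm
    have hpa : p ∣ k * p % (p * q) :=
      (Nat.dvd_mod_iff (dvd_mul_right p q)).mpr (dvd_mul_left p k)
    have hpc : p ∣ m * p % (p * q) :=
      (Nat.dvd_mod_iff (dvd_mul_right p q)).mpr (dvd_mul_left p m)
    have hqndvd : ∀ k', 1 ≤ k' → k' ≤ q - 1 → ((k' * p % (p * q) : ℕ) : ZMod q) ≠ 0 := by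
      intro k' h1 h2 h0
      rw [ZMod.natCast_eq_zero_iff] at h0
      have h0' : q ∣ k' * p := (Nat.dvd_mod_iff (dvd_mul_left q p)).mp h0
      rcases (Nat.Prime.dvd_mul hq).mp h0' with h | h
      · have := Nat.le_of_dvd (by omega) h; omega
      · exact hpq ((Nat.prime_dvd_prime_iff_eq hq hp).mp h).symm
    obtain ⟨s0, hs0, hcond⟩ := cond_equiv hq hcop rfl i hgq hpa hpc
      (Nat.mod_lt _ hNpos) (hqndvd k hk.1 hk.2) (hqndvd m hm.1 hm.2)
      (by rw [hxqz]; simp)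
    rw [hD i]
    exact filter_card_eq heq1 _ hinj _ s0 hs0 (fun s _ => hcond s)
  · intro a ha c hc
    rw [hQ] at ha hc
    obtain ⟨k, hk, rfl⟩ := Finset.mem_image.mp ha
    obtain ⟨m, hm, rfl⟩ := Finset.mem_image.mp hc
    rw [Finset.mem_Icc] at hk hm
    have hqa : q ∣ k * q % (p * q) :=
      (Nat.dvd_mod_iff (dvd_mul_left q p)).mpr (dvd_mul_left q k)
    have hqc : q ∣ m * q % (p * q) :=
      (Nat.dvd_mod_iff (dvd_mul_left q p)).mpr (dvd_mul_left q m)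
    have hpndvd : ∀ k', 1 ≤ k' → k' ≤ p - 1 → ((k' * q % (p * q) : ℕ) : ZMod p) ≠ 0 := by
      intro k' h1 h2 h0
      rw [ZMod.natCast_eq_zero_iff] at h0
      have h0' : p ∣ k' * q := (Nat.dvd_mod_iff (dvd_mul_right p q)).mp h0
      rcases (Nat.Prime.dvd_mul hp).mp h0' with h | h
      · have := Nat.le_of_dvd (by omega) h; omega
      · exact hpq ((Nat.prime_dvd_prime_iff_eq hp hq).mp h)
    obtain ⟨s0, hs0, hcond⟩ := cond_equiv hp hcop.symm (mul_comm p q) i hgp hqa hqc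
      (Nat.mod_lt _ hNpos) (hpndvd k hk.1 hk.2) (hpndvd m hm.1 hm.2)
      (by rw [hxpz]; exact pow_ne_zero _ (hgp.isUnit (by omega)).ne_zero)
    rw [hD i]
    exact filter_card_eq heq2 _ hinj _ s0 hs0 (fun s _ => hcond s)
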